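/- arXiv:2502.14210 — 3 statements merged into one kernel-verified Lean document; each statement's English description precedes it below -/
import Mathlib

section
/- Let B ∈ ℝ^{n×m}, A ∈ ℝ^{n×n}, R ∈ ℝ^{m×m} symmetric positive definite, and let P', P* ∈ ℝ^{n×n} be symmetric positive semidefinite. Define K' := (R + BᵀP'B)^{-1}BᵀP'A and K* := (R + BᵀP*B)^{-1}BᵀP*A. Then K' − K* = (R + BᵀP'B)^{-1}Bᵀ(P* − P')(BK* − A), and consequently ‖K' − K*‖ ≤ (‖A − BK*‖·‖B‖ / λ_min(R)) · ‖P' − P*‖ in spectral norm. -/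
open Matrix BigOperators MeasureTheory

/-- Spectral norm (operator norm induced by Euclidean norms). -/
noncomputable def sNorm {m n : ℕ} (M : Matrix (Fin m) (Fin n) ℝ) : ℝ :=
  ‖LinearMap.toContinuousLinearMap (Matrix.toEuclideanLin M)‖

/-- Frobenius norm. -/
noncomputable def fNorm {m n : ℕ} (M : Matrix (Fin m) (Fin n) ℝ) : ℝ :=
  Real.sqrt (∑ i, ∑ j, (M i j) ^ 2)

/-- `P`-induced norm: `‖X‖_P = sup_{z ≠ 0} √(zᵀXᵀPXz / zᵀPz)`. -/
noncomputable def pNorm {n : ℕ} (P X : Matrix (Fin n) (Fin n) ℝ) : ℝ :=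
  ⨆ z : {v : Fin n → ℝ // v ≠ 0},
    Real.sqrt ((z.1 ⬝ᵥ (Xᵀ * P * X).mulVec z.1) / (z.1 ⬝ᵥ P.mulVec z.1))

/-- Smallest eigenvalue of a symmetric matrix (as a Rayleigh-quotient infimum). -/
noncomputable def lamMin {n : ℕ} (M : Matrix (Fin n) (Fin n) ℝ) : ℝ :=
  ⨅ v : {v : Fin n → ℝ // v ⬝ᵥ v = 1}, v.1 ⬝ᵥ M.mulVec v.1

/-- Largest eigenvalue of a symmetric matrix (as a Rayleigh-quotient supremum). -/
noncomputable def lamMax {n : ℕ} (M : Matrix (Fin n) (Fin n) ℝ) : ℝ :=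
  ⨆ v : {v : Fin n → ℝ // v ⬝ᵥ v = 1}, v.1 ⬝ᵥ M.mulVec v.1

/-- Condition number `κ_M = λ_max(M)/λ_min(M)`. -/
noncomputable def condNum {n : ℕ} (M : Matrix (Fin n) (Fin n) ℝ) : ℝ :=
  lamMax M / lamMin M

/-- Smallest singular value. -/
noncomputable def sigMin {m n : ℕ} (M : Matrix (Fin m) (Fin n) ℝ) : ℝ :=
  Real.sqrt (lamMin (Mᵀ * M))

/-- Spectral radius: supremum of moduli of (complex) eigenvalues. -/
noncomputable def specRad {n : ℕ} (M : Matrix (Fin n) (Fin n) ℝ) : ℝ :=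
  ⨆ μ : spectrum ℂ (M.map ((↑) : ℝ → ℂ)), ‖(μ.1 : ℂ)‖

open scoped Matrix.Norms.L2Operator

private lemma sNorm_eq {m n : ℕ} (M : Matrix (Fin m) (Fin n) ℝ) : sNorm M = ‖M‖ := rfl

private lemma sNorm_transpose {m n : ℕ} (M : Matrix (Fin m) (Fin n) ℝ) :
    sNorm Mᵀ = sNorm M := by
  rw [sNorm_eq, sNorm_eq, ← Matrix.conjTranspose_eq_transpose_of_trivial,
    Matrix.l2_opNorm_conjTranspose]

private lemma sNorm_mul_le {k l m : ℕ} (M : Matrix (Fin k) (Fin l) ℝ)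
    (N : Matrix (Fin l) (Fin m) ℝ) :
    sNorm (M * N) ≤ sNorm M * sNorm N := Matrix.l2_opNorm_mul M N

private lemma sNorm_sub_rev {m n : ℕ} (M N : Matrix (Fin m) (Fin n) ℝ) :
    sNorm (M - N) = sNorm (N - M) := by
  rw [sNorm_eq, sNorm_eq]; exact norm_sub_rev M N

private lemma sNorm_nonneg {m n : ℕ} (M : Matrix (Fin m) (Fin n) ℝ) : 0 ≤ sNorm M :=
  norm_nonneg _

private lemma lamMin_bddBelow {k : ℕ} (R : Matrix (Fin k) (Fin k) ℝ) (hR : R.PosDef) :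
    BddBelow (Set.range fun v : {v : Fin k → ℝ // v ⬝ᵥ v = 1} => v.1 ⬝ᵥ R.mulVec v.1) := by
  refine ⟨0, ?_⟩
  rintro x ⟨⟨v, hv⟩, rfl⟩
  have hvne : v ≠ 0 := by rintro rfl; simp at hv
  simpa using (hR.dotProduct_mulVec_pos hvne).le

private lemma lamMin_le_rayleigh {k : ℕ} (R : Matrix (Fin k) (Fin k) ℝ) (hR : R.PosDef)
    (u : Fin k → ℝ) : lamMin R * (u ⬝ᵥ u) ≤ u ⬝ᵥ R.mulVec u := by
  rcases eq_or_ne u 0 with rfl | hu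
  · simp
  · have ht : 0 < u ⬝ᵥ u := by
      simpa using (dotProduct_star_self_pos_iff (v := u)).mpr hu
    set t := u ⬝ᵥ u with htdef
    set s := Real.sqrt t with hsdef
    have hs : 0 < s := Real.sqrt_pos.mpr ht
    have hs2 : s * s = t := Real.mul_self_sqrt ht.le
    have hv : (s⁻¹ • u) ⬝ᵥ (s⁻¹ • u) = 1 := by
      rw [smul_dotProduct, dotProduct_smul, smul_eq_mul, smul_eq_mul, ← htdef]
      field_simp
      nlinarith
    have hle : lamMin R ≤ (s⁻¹ • u) ⬝ᵥ R.mulVec (s⁻¹ • u) :=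
      ciInf_le (lamMin_bddBelow R hR) ⟨s⁻¹ • u, hv⟩
    have hval : (s⁻¹ • u) ⬝ᵥ R.mulVec (s⁻¹ • u) = s⁻¹ * (s⁻¹ * (u ⬝ᵥ R.mulVec u)) := by
      rw [Matrix.mulVec_smul, smul_dotProduct, dotProduct_smul, smul_eq_mul, smul_eq_mul]
    rw [hval] at hle
    have := mul_le_mul_of_nonneg_right hle ht.le
    calc lamMin R * t ≤ s⁻¹ * (s⁻¹ * (u ⬝ᵥ R.mulVec u)) * t := this
      _ = (s⁻¹ * s⁻¹ * t) * (u ⬝ᵥ R.mulVec u) := by ring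
      _ = u ⬝ᵥ R.mulVec u := by
          have hinv : s⁻¹ * s⁻¹ * t = 1 := by rw [← hs2]; field_simp
          rw [hinv, one_mul]

private lemma lamMin_pos {k : ℕ} (hk : 0 < k) (R : Matrix (Fin k) (Fin k) ℝ) (hR : R.PosDef) :
    0 < lamMin R := by
  set sph : Set (Fin k → ℝ) := {v | v ⬝ᵥ v = 1} with hsph
  have hdot : Continuous fun v : Fin k → ℝ => v ⬝ᵥ v := by
    simp only [dotProduct]
    exact continuous_finset_sum _ fun i _ => (continuous_apply i).mul (continuous_apply i)
  have hq : Continuous fun v : Fin k → ℝ => v ⬝ᵥ R.mulVec v := by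
    simp only [dotProduct, mulVec]
    refine continuous_finset_sum _ fun i _ => (continuous_apply i).mul ?_
    exact continuous_finset_sum _ fun j _ => continuous_const.mul (continuous_apply j)
  have hclosed : IsClosed sph := isClosed_eq hdot continuous_const
  have hbdd : Bornology.IsBounded sph := by
    refine (Metric.isBounded_closedBall (x := (0 : Fin k → ℝ)) (r := 1)).subset ?_
    intro v hv
    simp only [Metric.mem_closedBall, dist_zero_right]
    refine (pi_norm_le_iff_of_nonneg zero_le_one).mpr fun i => ?_
    have h1 : v i * v i ≤ 1 := by
      have := Finset.single_le_sum (f := fun j => v j * v j)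
        (fun j _ => mul_self_nonneg (v j)) (Finset.mem_univ i)
      simpa [hsph, dotProduct] using this.trans_eq hv
    simpa [Real.norm_eq_abs] using abs_le_one_iff_mul_self_le_one.mpr h1
  have hcpt : IsCompact sph := Metric.isCompact_of_isClosed_isBounded hclosed hbdd
  have hne : sph.Nonempty := by
    refine ⟨Pi.single ⟨0, hk⟩ 1, ?_⟩
    simp [hsph, dotProduct, Pi.single_apply]
  obtain ⟨v₀, hv₀, hmin⟩ := hcpt.exists_isMinOn hne hq.continuousOn
  have hv₀ne : v₀ ≠ 0 := by rintro rfl; simp [hsph] at hv₀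
  have hpos : 0 < v₀ ⬝ᵥ R.mulVec v₀ := by simpa using hR.dotProduct_mulVec_pos hv₀ne
  haveI : Nonempty {v : Fin k → ℝ // v ⬝ᵥ v = 1} := ⟨⟨v₀, hv₀⟩⟩
  have : v₀ ⬝ᵥ R.mulVec v₀ ≤ lamMin R := by
    refine le_ciInf fun ⟨v, hv⟩ => hmin hv
  linarith

private lemma sNorm_inv_le {k : ℕ} (S : Matrix (Fin k) (Fin k) ℝ) (hS : S.PosDef)
    {c : ℝ} (hc : 0 < c) (hray : ∀ u : Fin k → ℝ, c * (u ⬝ᵥ u) ≤ u ⬝ᵥ S.mulVec u) :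
    sNorm S⁻¹ ≤ 1 / c := by
  refine ContinuousLinearMap.opNorm_le_bound _ (by positivity) fun x => ?_
  set w : Fin k → ℝ := WithLp.equiv 2 _ x with hw
  set u : Fin k → ℝ := S⁻¹ *ᵥ w with hu
  have hSu : S *ᵥ u = w := by
    rw [hu, Matrix.mulVec_mulVec, Matrix.mul_nonsing_inv _ hS.det_pos.ne'.isUnit,
      Matrix.one_mulVec]
  set u' : EuclideanSpace ℝ (Fin k) := (WithLp.equiv 2 _).symm u with hu'
  have happ : LinearMap.toContinuousLinearMap (Matrix.toEuclideanLin S⁻¹) x = u' := rfl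
  rw [happ]
  have hxw : x = (WithLp.equiv 2 (Fin k → ℝ)).symm w :=
    ((WithLp.equiv 2 _).symm_apply_apply x).symm
  have hnorm2 : u ⬝ᵥ u = ‖u'‖ ^ 2 := by
    have h1 := real_inner_self_eq_norm_sq u'
    rwa [hu', WithLp.equiv_symm_apply, EuclideanSpace.inner_toLp_toLp, star_trivial] at h1
  have hCS : u ⬝ᵥ w ≤ ‖u'‖ * ‖x‖ := by
    have h1 := real_inner_le_norm u' x
    rwa [hu', hxw, WithLp.equiv_symm_apply, EuclideanSpace.inner_toLp_toLp, star_trivial,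
      dotProduct_comm, ← WithLp.equiv_symm_apply, ← hxw] at h1
  have key : c * ‖u'‖ ^ 2 ≤ ‖u'‖ * ‖x‖ := by
    have h1 := hray u
    rw [hSu, hnorm2] at h1
    exact h1.trans hCS
  rcases (norm_nonneg u').eq_or_lt' with h | h
  · rw [h]; positivity
  · rw [div_mul_eq_mul_div, one_mul, le_div_iff₀ hc]
    nlinarith [mul_pos hc h]

/-- Exact difference formula for Riccati feedback gains and the resulting
spectral-norm bound. -/
theorem gain_difference_formula {n m : ℕ}
    (A : Matrix (Fin n) (Fin n) ℝ) (B : Matrix (Fin n) (Fin m) ℝ)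
    (R : Matrix (Fin m) (Fin m) ℝ) (hR : R.PosDef)
    (P' Pstar : Matrix (Fin n) (Fin n) ℝ)
    (hP' : P'.PosSemidef) (hPstar : Pstar.PosSemidef)
    (K' Kstar : Matrix (Fin m) (Fin n) ℝ)
    (hK' : K' = (R + Bᵀ * P' * B)⁻¹ * (Bᵀ * P' * A))
    (hKstar : Kstar = (R + Bᵀ * Pstar * B)⁻¹ * (Bᵀ * Pstar * A)) :
    K' - Kstar = (R + Bᵀ * P' * B)⁻¹ * (Bᵀ * (Pstar - P') * (B * Kstar - A)) ∧
      sNorm (K' - Kstar) ≤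
        sNorm (A - B * Kstar) * sNorm B / lamMin R * sNorm (P' - Pstar) := by
  have hBPB : (Bᵀ * P' * B).PosSemidef := by
    have := hP'.conjTranspose_mul_mul_same B
    rwa [Matrix.conjTranspose_eq_transpose_of_trivial] at this
  have hBPB2 : (Bᵀ * Pstar * B).PosSemidef := by
    have := hPstar.conjTranspose_mul_mul_same B
    rwa [Matrix.conjTranspose_eq_transpose_of_trivial] at this
  have hS : (R + Bᵀ * P' * B).PosDef := hR.add_posSemidef hBPB
  have hS2 : (R + Bᵀ * Pstar * B).PosDef := hR.add_posSemidef hBPB2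
  have hSdet : IsUnit (R + Bᵀ * P' * B).det := hS.det_pos.ne'.isUnit
  have hS2det : IsUnit (R + Bᵀ * Pstar * B).det := hS2.det_pos.ne'.isUnit
  have h1 : (R + Bᵀ * P' * B) * K' = Bᵀ * P' * A := by
    rw [hK', Matrix.mul_nonsing_inv_cancel_left _ _ hSdet]
  have h2 : (R + Bᵀ * Pstar * B) * Kstar = Bᵀ * Pstar * A := by
    rw [hKstar, Matrix.mul_nonsing_inv_cancel_left _ _ hS2det]
  rw [Matrix.add_mul] at h2
  have h3 : R * Kstar = Bᵀ * Pstar * A - Bᵀ * Pstar * B * Kstar := eq_sub_of_add_eq h2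
  have key : (R + Bᵀ * P' * B) * (K' - Kstar) = Bᵀ * (Pstar - P') * (B * Kstar - A) := by
    rw [Matrix.mul_sub, h1, Matrix.add_mul, h3]
    simp only [Matrix.mul_sub, Matrix.sub_mul, Matrix.mul_assoc]
    abel
  have hid : K' - Kstar = (R + Bᵀ * P' * B)⁻¹ * (Bᵀ * (Pstar - P') * (B * Kstar - A)) := by
    rw [← key, Matrix.nonsing_inv_mul_cancel_left _ _ hSdet]
  refine ⟨hid, ?_⟩
  rcases Nat.eq_zero_or_pos m with hm | hm
  · subst hm
    haveI hE : IsEmpty {v : Fin 0 → ℝ // v ⬝ᵥ v = 1} :=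
      ⟨fun v => by have := v.2; simp [dotProduct] at this⟩
    have hlam : lamMin R = 0 := Real.iInf_of_isEmpty _
    have hLHS : sNorm (K' - Kstar) ≤ 0 := by
      refine ContinuousLinearMap.opNorm_le_bound _ le_rfl fun x => ?_
      have hall : ∀ y : EuclideanSpace ℝ (Fin 0), ‖y‖ = 0 := fun y => by
        rw [EuclideanSpace.norm_eq]; simp
      rw [hall]
      positivity
    rw [hlam]
    simpa using hLHS
  · have hlam := lamMin_pos hm R hR
    have hray : ∀ u : Fin m → ℝ,
        lamMin R * (u ⬝ᵥ u) ≤ u ⬝ᵥ (R + Bᵀ * P' * B).mulVec u := fun u => by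
      have hr := lamMin_le_rayleigh R hR u
      have h2' : (0:ℝ) ≤ u ⬝ᵥ (Bᵀ * P' * B).mulVec u := by simpa using hBPB.dotProduct_mulVec_nonneg u
      rw [Matrix.add_mulVec, dotProduct_add]
      linarith
    have hinv := sNorm_inv_le _ hS hlam hray
    have h0 : (0:ℝ) ≤ 1 / lamMin R := by positivity
    calc sNorm (K' - Kstar)
        = sNorm ((R + Bᵀ * P' * B)⁻¹ * (Bᵀ * (Pstar - P') * (B * Kstar - A))) := by rw [hid]
      _ ≤ sNorm (R + Bᵀ * P' * B)⁻¹ * sNorm (Bᵀ * (Pstar - P') * (B * Kstar - A)) :=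
          sNorm_mul_le _ _
      _ ≤ (1 / lamMin R) * (sNorm (Bᵀ * (Pstar - P')) * sNorm (B * Kstar - A)) :=
          mul_le_mul hinv (sNorm_mul_le _ _) (sNorm_nonneg _)
            (by positivity)
      _ ≤ (1 / lamMin R) * ((sNorm Bᵀ * sNorm (Pstar - P')) * sNorm (B * Kstar - A)) := by
          refine mul_le_mul_of_nonneg_left ?_ h0
          exact mul_le_mul_of_nonneg_right (sNorm_mul_le _ _) (sNorm_nonneg _)
      _ = sNorm (A - B * Kstar) * sNorm B / lamMin R * sNorm (P' - Pstar) := by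
          rw [sNorm_transpose, sNorm_sub_rev Pstar P', sNorm_sub_rev (B * Kstar) A]
          ring
end

section
/- Let A ∈ ℝ^{n×n}, B ∈ ℝ^{n×m}, Q ∈ ℝ^{n×n}, R ∈ ℝ^{m×m} symmetric, P̃ ∈ ℝ^{n×n} symmetric positive semidefinite, K ∈ ℝ^{m×n}, and σ > 0. Define the quadratic Q-function Q(x, u) := xᵀQx + uᵀRu + (Ax + Bu)ᵀP̃(Ax + Bu). Let x₀ be a random vector in ℝⁿ with 𝔼[x₀x₀ᵀ] = Σ₀ and ‖x₀‖² ≤ C_m almost surely, and let η be an independent standard Gaussian vector on ℝ^m (mean 0, covariance I_m). Then 𝔼[ −(1/σ)·Q(x₀, −Kx₀ + ση)·η·x₀ᵀ ] = 2((R + BᵀP̃B)K − BᵀP̃A)Σ₀. -/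
open Matrix BigOperators MeasureTheory

/-- The quadratic `Q`-function `Q(x,u) = xᵀQx + uᵀRu + (Ax+Bu)ᵀP̃(Ax+Bu)`. -/
noncomputable def qFun {n m : ℕ} (A Q P : Matrix (Fin n) (Fin n) ℝ)
    (B : Matrix (Fin n) (Fin m) ℝ) (R : Matrix (Fin m) (Fin m) ℝ)
    (x : Fin n → ℝ) (u : Fin m → ℝ) : ℝ :=
  x ⬝ᵥ Q.mulVec x + u ⬝ᵥ R.mulVec u
    + (A.mulVec x + B.mulVec u) ⬝ᵥ P.mulVec (A.mulVec x + B.mulVec u)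


open ProbabilityTheory Real in
/-- The standard Gaussian on `ℝ`. -/
noncomputable def stdg : Measure ℝ := ProbabilityTheory.gaussianReal 0 1

instance : IsProbabilityMeasure stdg := by unfold stdg; infer_instance

open ProbabilityTheory Real in
lemma stdg_pdf (g : ℝ → ℝ) :
    ∫ x, g x ∂stdg = ∫ x, gaussianPDFReal 0 1 x * g x := by
  rw [stdg, gaussianReal_of_var_ne_zero _ one_ne_zero]
  have : gaussianPDF 0 1 = fun x => ((Real.toNNReal (gaussianPDFReal 0 1 x) : NNReal) : ENNReal) := by
    ext x; simp [gaussianPDF, ENNReal.ofReal]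
  rw [this, integral_withDensity_eq_integral_smul
    ((measurable_gaussianPDFReal 0 1).real_toNNReal)]
  congr 1; ext x
  simp [NNReal.smul_def, Real.coe_toNNReal _ (gaussianPDFReal_nonneg 0 1 x)]

open ProbabilityTheory Real in
lemma pdf_eq (x : ℝ) : gaussianPDFReal 0 1 x = (√(2*π))⁻¹ * rexp (-(2⁻¹) * x^2) := by
  rw [gaussianPDFReal]
  norm_num
  left; ring_nf

open ProbabilityTheory Real in
lemma gaussianPDFReal_neg' (x : ℝ) : gaussianPDFReal 0 1 (-x) = gaussianPDFReal 0 1 x := by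
  simp [gaussianPDFReal, neg_sq]

/-- Moments of the standard Gaussian. -/
noncomputable def gM (k : ℕ) : ℝ := ∫ x, x ^ k ∂stdg

lemma gM_zero : gM 0 = 1 := by simp [gM]

open ProbabilityTheory Real in
lemma gM_odd (k : ℕ) (hk : Odd k) : gM k = 0 := by
  have h : gM k = - gM k := by
    rw [gM, stdg_pdf]
    calc ∫ x, gaussianPDFReal 0 1 x * x ^ k
        = ∫ x, gaussianPDFReal 0 1 (-x) * (-x) ^ k := (integral_neg_eq_self _ _).symm
      _ = - ∫ x, gaussianPDFReal 0 1 x * x ^ k := by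
          rw [← integral_neg]; congr 1; ext x
          rw [gaussianPDFReal_neg', hk.neg_pow]; ring
  linarith

open Real in
lemma sqrt2pi_pos : 0 < √(2*π) := Real.sqrt_pos.mpr (by positivity)

open ProbabilityTheory Real in
lemma key2 : ∫ x : ℝ, x ^ 2 * rexp (-(2⁻¹) * x ^ 2) = √(2*π) := by
  have h1 : ∫ x : ℝ, x ^ 2 * rexp (-(2⁻¹) * x ^ 2)
      = 2 * ∫ x in Set.Ioi (0:ℝ), x ^ 2 * rexp (-(2⁻¹) * x ^ 2) := by
    rw [← integral_comp_abs (f := fun x => x ^ 2 * rexp (-(2⁻¹) * x ^ 2))]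
    simp [sq_abs]
  have h2 : ∫ x in Set.Ioi (0:ℝ), x ^ 2 * rexp (-(2⁻¹) * x ^ 2)
      = (2⁻¹ : ℝ) ^ (-((2:ℝ)+1)/2) * (1/2) * Real.Gamma (((2:ℝ)+1)/2) := by
    have := integral_rpow_mul_exp_neg_mul_rpow (p := 2) (q := 2) (b := 2⁻¹)
      (by norm_num) (by norm_num) (by norm_num)
    rw [← this]
    have hx : ∀ y:ℝ, y ^ (2:ℝ) = y ^ (2:ℕ) := fun y => by
      rw [show (2:ℝ) = ((2:ℕ):ℝ) by norm_num, Real.rpow_natCast]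
    refine setIntegral_congr_fun measurableSet_Ioi (fun x _ => ?_)
    simp only [hx]
  have hgamma : Real.Gamma (((2:ℝ)+1)/2) = √π / 2 := by
    have h : ((2:ℝ)+1)/2 = 1/2 + 1 := by norm_num
    rw [h, Real.Gamma_add_one (by norm_num), Real.Gamma_one_half_eq]
    ring
  have hpow : (2⁻¹ : ℝ) ^ (-((2:ℝ)+1)/2) = 2 * √2 := by
    rw [Real.inv_rpow (by norm_num : (0:ℝ) ≤ 2),
      show (-((2:ℝ)+1)/2) = -((3:ℝ)/2) by norm_num,
      Real.rpow_neg (by norm_num : (0:ℝ) ≤ 2), inv_inv,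
      show ((3:ℝ)/2) = 1 + (1/2 : ℝ) by norm_num,
      Real.rpow_add (by norm_num : (0:ℝ) < 2), Real.rpow_one,
      ← Real.sqrt_eq_rpow]
  rw [h1, h2, hgamma, hpow, Real.sqrt_mul (by norm_num : (0:ℝ) ≤ 2)]
  ring

open ProbabilityTheory Real in
lemma gM_two : gM 2 = 1 := by
  rw [gM, stdg_pdf]
  have : (fun x : ℝ => gaussianPDFReal 0 1 x * x ^ 2)
      = fun x : ℝ => (√(2*π))⁻¹ * (x ^ 2 * rexp (-(2⁻¹) * x ^ 2)) := by
    ext x; rw [pdf_eq]; ring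
  rw [this, MeasureTheory.integral_const_mul, key2, inv_mul_cancel₀ sqrt2pi_pos.ne']

open ProbabilityTheory Real in
lemma integrable_pow_stdg (k : ℕ) : Integrable (fun x => x ^ k) stdg := by
  rw [stdg, gaussianReal_of_var_ne_zero _ one_ne_zero]
  rw [integrable_withDensity_iff (measurable_gaussianPDF 0 1)
    (Filter.Eventually.of_forall fun x => ENNReal.ofReal_lt_top)]
  have : (fun x : ℝ => x ^ k * (gaussianPDF 0 1 x).toReal)
      = fun x : ℝ => (√(2*π))⁻¹ * (x ^ k * rexp (-(2⁻¹) * x ^ 2)) := by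
    ext x
    rw [gaussianPDF, ENNReal.toReal_ofReal (gaussianPDFReal_nonneg 0 1 x), pdf_eq]
    ring
  rw [this]
  apply Integrable.const_mul
  have h := integrable_rpow_mul_exp_neg_mul_sq (b := 2⁻¹) (by norm_num) (s := (k:ℝ))
    (by have := Nat.cast_nonneg (α:=ℝ) k; linarith)
  have hx : ∀ y:ℝ, y ^ ((k:ℕ):ℝ) = y ^ (k:ℕ) := fun y => by rw [Real.rpow_natCast]
  simpa only [hx, neg_mul] using h

lemma integral_piG_prod {m : ℕ} (f : Fin m → ℝ → ℝ) :
    ∫ y : Fin m → ℝ, ∏ c, f c (y c) ∂(Measure.pi fun _ => stdg) = ∏ c, ∫ x, f c x ∂stdg := by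
  letI : MeasureSpace ℝ := ⟨stdg⟩
  haveI : SigmaFinite (volume : Measure ℝ) := by
    show SigmaFinite stdg; infer_instance
  exact MeasureTheory.integral_fintype_prod_eq_prod f

lemma integrable_piG_prod {m : ℕ} (f : Fin m → ℝ → ℝ) (hf : ∀ c, Integrable (f c) stdg) :
    Integrable (fun y : Fin m → ℝ => ∏ c, f c (y c)) (Measure.pi fun _ => stdg) := by
  letI : MeasureSpace ℝ := ⟨stdg⟩
  haveI : SigmaFinite (volume : Measure ℝ) := by
    show SigmaFinite stdg; infer_instance
  exact MeasureTheory.Integrable.fintype_prod hf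

/-- Monomial function on `Fin m → ℝ`. -/
def mono {m : ℕ} (e : Fin m → ℕ) (y : Fin m → ℝ) : ℝ := ∏ c, y c ^ e c

/-- Indicator exponent. -/
def en {m : ℕ} (a : Fin m) : Fin m → ℕ := fun c => if c = a then 1 else 0

lemma mono_measurable {m : ℕ} (e : Fin m → ℕ) : Measurable (mono e) := by
  unfold mono
  exact Finset.measurable_prod _ fun c _ => (measurable_pi_apply c).pow_const _

lemma mono_integrable {m : ℕ} (e : Fin m → ℕ) :
    Integrable (mono e) (Measure.pi fun _ : Fin m => stdg) :=
  integrable_piG_prod (fun c x => x ^ e c) (fun _ => integrable_pow_stdg _)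

lemma mono_integral {m : ℕ} (e : Fin m → ℕ) :
    ∫ y, mono e y ∂(Measure.pi fun _ : Fin m => stdg) = ∏ c, gM (e c) :=
  integral_piG_prod (fun c x => x ^ e c)

lemma mono_en {m : ℕ} (a : Fin m) (y : Fin m → ℝ) : mono (en a) y = y a := by
  unfold mono en
  rw [Finset.prod_eq_single a (fun c _ hc => by simp [hc]) (by simp)]
  simp

lemma mono_add {m : ℕ} (e f : Fin m → ℕ) (y : Fin m → ℝ) :
    mono (e + f) y = mono e y * mono f y := by
  unfold mono
  rw [← Finset.prod_mul_distrib]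
  exact Finset.prod_congr rfl fun c _ => pow_add _ _ _

lemma prod_gM_one {m : ℕ} (i : Fin m) : ∏ c, gM (en i c) = 0 :=
  Finset.prod_eq_zero (Finset.mem_univ i) (by simp [en, gM_odd 1 odd_one])

lemma prod_gM_two {m : ℕ} (k i : Fin m) :
    ∏ c, gM ((en k + en i) c) = if k = i then 1 else 0 := by
  by_cases h : k = i
  · subst h
    simp only [if_pos rfl]
    rw [Finset.prod_eq_single k (fun c _ hc => by simp [en, hc, gM_zero]) (by simp)]
    simp [en, gM_two]
  · rw [if_neg h]
    exact Finset.prod_eq_zero (Finset.mem_univ k)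
      (by simp [en, h, gM_odd 1 odd_one])

lemma prod_gM_three {m : ℕ} (k l i : Fin m) :
    ∏ c, gM ((en k + en l + en i) c) = 0 := by
  have g1 := gM_odd 1 odd_one
  have g3 := gM_odd 3 (by decide)
  by_cases hkl : k = l
  · subst hkl
    by_cases hki : k = i
    · subst hki
      exact Finset.prod_eq_zero (Finset.mem_univ k) (by simp [en, g3])
    · exact Finset.prod_eq_zero (Finset.mem_univ i) (by simp [en, Ne.symm hki, g1])
  · by_cases hki : k = i
    · subst hki
      exact Finset.prod_eq_zero (Finset.mem_univ l) (by simp [en, Ne.symm hkl, g1])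
    · by_cases hli : l = i
      · subst hli
        exact Finset.prod_eq_zero (Finset.mem_univ k) (by simp [en, hkl, hki, g1])
      · exact Finset.prod_eq_zero (Finset.mem_univ i)
          (by simp [en, Ne.symm hki, Ne.symm hli, g1])

section Algebra

lemma dot_swap {a b : ℕ} (M : Matrix (Fin a) (Fin b) ℝ) (u : Fin a → ℝ) (v : Fin b → ℝ) :
    u ⬝ᵥ (M *ᵥ v) = (Mᵀ *ᵥ u) ⬝ᵥ v := by
  rw [dotProduct_mulVec, mulVec_transpose]

lemma bexp {p : ℕ} (P : Matrix (Fin p) (Fin p) ℝ) (hP : Pᵀ = P) (a b : Fin p → ℝ) :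
    (a + b) ⬝ᵥ P *ᵥ (a + b)
      = a ⬝ᵥ P *ᵥ a + 2 * ((P *ᵥ a) ⬝ᵥ b) + b ⬝ᵥ P *ᵥ b := by
  rw [mulVec_add, dotProduct_add, add_dotProduct, add_dotProduct]
  have h1 : a ⬝ᵥ P *ᵥ b = (P *ᵥ a) ⬝ᵥ b := by rw [dot_swap, hP]
  have h2 : b ⬝ᵥ P *ᵥ a = (P *ᵥ a) ⬝ᵥ b := dotProduct_comm _ _
  rw [h1, h2]; ring

lemma quadform {a b : ℕ} (M : Matrix (Fin b) (Fin a) ℝ) (N : Matrix (Fin b) (Fin b) ℝ)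
    (x : Fin a → ℝ) :
    (M *ᵥ x) ⬝ᵥ (N *ᵥ (M *ᵥ x)) = x ⬝ᵥ ((Mᵀ*(N*M)) *ᵥ x) := by
  symm
  rw [← mulVec_mulVec, dot_swap, transpose_transpose, ← mulVec_mulVec]

end Algebra

lemma qExpand {n m : ℕ} (A Q P : Matrix (Fin n) (Fin n) ℝ) (B : Matrix (Fin n) (Fin m) ℝ)
    (R : Matrix (Fin m) (Fin m) ℝ) (K : Matrix (Fin m) (Fin n) ℝ)
    (hR : Rᵀ = R) (hP : Pᵀ = P) (σ : ℝ) (x : Fin n → ℝ) (y : Fin m → ℝ) :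
    qFun A Q P B R x (-(K.mulVec x) + σ • y)
      = qFun A Q P B R x (-(K.mulVec x))
        + 2*σ*(((Bᵀ*P*A - (R + Bᵀ*P*B)*K) *ᵥ x) ⬝ᵥ y)
        + σ^2 * (y ⬝ᵥ ((R + Bᵀ*P*B) *ᵥ y)) := by
  set v : Fin m → ℝ := -(K.mulVec x) with hv
  set w : Fin n → ℝ := A *ᵥ x + B *ᵥ v with hw
  have e2 : (v + σ • y) ⬝ᵥ R *ᵥ (v + σ • y)
      = v ⬝ᵥ R *ᵥ v + 2 * σ * ((R *ᵥ v) ⬝ᵥ y) + σ^2 * (y ⬝ᵥ R *ᵥ y) := by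
    rw [bexp R hR]
    simp only [mulVec_smul, dotProduct_smul, smul_dotProduct, smul_eq_mul]
    ring
  have e3 : A *ᵥ x + B *ᵥ (v + σ • y) = w + σ • (B *ᵥ y) := by
    rw [mulVec_add, mulVec_smul, hw, add_assoc]
  have e4 : (w + σ • (B *ᵥ y)) ⬝ᵥ P *ᵥ (w + σ • (B *ᵥ y))
      = w ⬝ᵥ P *ᵥ w + 2 * σ * (((Bᵀ*P) *ᵥ w) ⬝ᵥ y)
        + σ^2 * (y ⬝ᵥ ((Bᵀ*P*B) *ᵥ y)) := by
    rw [bexp P hP]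
    simp only [mulVec_smul, dotProduct_smul, smul_dotProduct, smul_eq_mul]
    have h5 : (P *ᵥ w) ⬝ᵥ (B *ᵥ y) = ((Bᵀ*P) *ᵥ w) ⬝ᵥ y := by
      rw [dot_swap, mulVec_mulVec]
    have h6 : y ⬝ᵥ ((Bᵀ*P*B) *ᵥ y) = (B *ᵥ y) ⬝ᵥ P *ᵥ (B *ᵥ y) := by
      rw [Matrix.mul_assoc, ← mulVec_mulVec, dot_swap, transpose_transpose,
        ← mulVec_mulVec]
    rw [h5, ← h6]
    ring
  have hvec : R *ᵥ v + (Bᵀ*P) *ᵥ w = (Bᵀ*P*A - (R + Bᵀ*P*B)*K) *ᵥ x := by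
    simp only [hv, hw, mulVec_neg, mulVec_add, sub_mulVec, add_mulVec,
      Matrix.add_mul, ← mulVec_mulVec]
    abel
  have lin : (R *ᵥ v) ⬝ᵥ y + ((Bᵀ*P) *ᵥ w) ⬝ᵥ y
      = ((Bᵀ*P*A - (R + Bᵀ*P*B)*K) *ᵥ x) ⬝ᵥ y := by
    rw [← add_dotProduct, hvec]
  have quad : y ⬝ᵥ R *ᵥ y + y ⬝ᵥ ((Bᵀ*P*B) *ᵥ y) = y ⬝ᵥ ((R + Bᵀ*P*B) *ᵥ y) := by
    rw [add_mulVec, dotProduct_add]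
  calc qFun A Q P B R x (v + σ • y)
      = x ⬝ᵥ Q *ᵥ x + (v + σ • y) ⬝ᵥ R *ᵥ (v + σ • y)
        + (w + σ • (B *ᵥ y)) ⬝ᵥ P *ᵥ (w + σ • (B *ᵥ y)) := by
        rw [qFun, e3]
    _ = (x ⬝ᵥ Q *ᵥ x + v ⬝ᵥ R *ᵥ v + w ⬝ᵥ P *ᵥ w)
        + 2*σ*((R *ᵥ v) ⬝ᵥ y + ((Bᵀ*P) *ᵥ w) ⬝ᵥ y)
        + σ^2 * (y ⬝ᵥ R *ᵥ y + y ⬝ᵥ ((Bᵀ*P*B) *ᵥ y)) := by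
        rw [e2, e4]; ring
    _ = _ := by rw [lin, quad, qFun, hw]

lemma q0_form {n m : ℕ} (A Q P : Matrix (Fin n) (Fin n) ℝ) (B : Matrix (Fin n) (Fin m) ℝ)
    (R : Matrix (Fin m) (Fin m) ℝ) (K : Matrix (Fin m) (Fin n) ℝ) (x : Fin n → ℝ) :
    qFun A Q P B R x (-(K.mulVec x))
      = x ⬝ᵥ ((Q + Kᵀ*(R*K) + (A - B*K)ᵀ*(P*(A - B*K))) *ᵥ x) := by
  have h1 : (-(K *ᵥ x)) ⬝ᵥ R *ᵥ (-(K *ᵥ x)) = x ⬝ᵥ ((Kᵀ*(R*K)) *ᵥ x) := by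
    rw [mulVec_neg, neg_dotProduct, dotProduct_neg, neg_neg, quadform]
  have h2 : A *ᵥ x + B *ᵥ (-(K *ᵥ x)) = (A - B*K) *ᵥ x := by
    rw [mulVec_neg, mulVec_mulVec, sub_mulVec, ← sub_eq_add_neg]
  rw [qFun, h1, h2, quadform, add_mulVec, add_mulVec, dotProduct_add, dotProduct_add]

lemma sq_le_of_mem {a : ℕ} (x : Fin a → ℝ) (C : ℝ) (hx : ∑ i, x i ^ 2 ≤ C) (i : Fin a) :
    x i ^ 2 ≤ C :=
  le_trans (Finset.single_le_sum (f := fun i => x i ^ 2)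
    (fun i _ => sq_nonneg _) (Finset.mem_univ i)) hx

lemma mul_le_of_mem {a : ℕ} (x : Fin a → ℝ) (C : ℝ) (hx : ∑ i, x i ^ 2 ≤ C)
    (i j : Fin a) : |x i * x j| ≤ C := by
  have hC0 : 0 ≤ C := le_trans (by positivity) hx
  have h1 : |x i| ≤ Real.sqrt C := Real.abs_le_sqrt (sq_le_of_mem x C hx i)
  have h2 : |x j| ≤ Real.sqrt C := Real.abs_le_sqrt (sq_le_of_mem x C hx j)
  calc |x i * x j| = |x i| * |x j| := abs_mul _ _
    _ ≤ Real.sqrt C * Real.sqrt C :=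
        mul_le_mul h1 h2 (abs_nonneg _) (Real.sqrt_nonneg _)
    _ = C := Real.mul_self_sqrt hC0

lemma quad_bound {a : ℕ} (M : Matrix (Fin a) (Fin a) ℝ) (C : ℝ) (x : Fin a → ℝ)
    (hx : ∑ i, x i ^ 2 ≤ C) :
    |x ⬝ᵥ M *ᵥ x| ≤ (∑ i, ∑ j, |M i j|) * C := by
  have : x ⬝ᵥ M *ᵥ x = ∑ i, ∑ j, M i j * (x i * x j) := by
    simp only [dotProduct, Matrix.mulVec, Finset.mul_sum]
    exact Finset.sum_congr rfl fun i _ => Finset.sum_congr rfl fun j _ => by ring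
  rw [this, Finset.sum_mul]
  refine le_trans (Finset.abs_sum_le_sum_abs _ _) (Finset.sum_le_sum fun i _ => ?_)
  rw [Finset.sum_mul]
  refine le_trans (Finset.abs_sum_le_sum_abs _ _) (Finset.sum_le_sum fun j _ => ?_)
  rw [abs_mul]
  exact mul_le_mul_of_nonneg_left (mul_le_of_mem x C hx i j) (abs_nonneg _)

lemma lin_bound {a : ℕ} (g : Fin a → ℝ) (C : ℝ) (x : Fin a → ℝ)
    (hx : ∑ i, x i ^ 2 ≤ C) (j : Fin a) :
    |(∑ i, g i * x i) * x j| ≤ (∑ i, |g i|) * C := by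
  have : (∑ i, g i * x i) * x j = ∑ i, g i * (x i * x j) := by
    rw [Finset.sum_mul]
    exact Finset.sum_congr rfl fun i _ => by ring
  rw [this, Finset.sum_mul]
  refine le_trans (Finset.abs_sum_le_sum_abs _ _) (Finset.sum_le_sum fun i _ => ?_)
  rw [abs_mul]
  exact mul_le_mul_of_nonneg_left (mul_le_of_mem x C hx i j) (abs_nonneg _)

lemma meas_dot {n : ℕ} (M : Matrix (Fin n) (Fin n) ℝ) :
    Measurable fun x : Fin n → ℝ => x ⬝ᵥ (M *ᵥ x) := by
  simp only [dotProduct, Matrix.mulVec]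
  exact Finset.measurable_sum _ fun a _ =>
    (measurable_pi_apply a).mul
      (Finset.measurable_sum _ fun b _ => (measurable_pi_apply b).const_mul _)

lemma meas_mulVec {n m : ℕ} (L : Matrix (Fin m) (Fin n) ℝ) (k : Fin m) :
    Measurable fun x : Fin n → ℝ => (L *ᵥ x) k := by
  simp only [Matrix.mulVec, dotProduct]
  exact Finset.measurable_sum _ fun a _ => (measurable_pi_apply a).const_mul _


/-- Unbiasedness of the one-point gradient estimate:
`𝔼[ −(1/σ)·Q(x₀, −Kx₀+ση)·η·x₀ᵀ ] = 2((R + BᵀP̃B)K − BᵀP̃A)Σ₀`, entrywise. -/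
theorem gradient_estimate_unbiased {n m : ℕ}
    (A Q Ptil Sigma0 : Matrix (Fin n) (Fin n) ℝ) (B : Matrix (Fin n) (Fin m) ℝ)
    (R : Matrix (Fin m) (Fin m) ℝ) (K : Matrix (Fin m) (Fin n) ℝ)
    (hQ : Q.IsSymm) (hR : R.IsSymm) (hPtil : Ptil.PosSemidef)
    (σ : ℝ) (hσ : 0 < σ) (C_m : ℝ)
    {Ω : Type*} [MeasurableSpace Ω] (ℙ : Measure Ω) [IsProbabilityMeasure ℙ]
    (x₀ : Ω → (Fin n → ℝ)) (η : Ω → (Fin m → ℝ))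
    (hx₀meas : Measurable x₀) (hηmeas : Measurable η)
    (hcov : ∀ i j, ∫ ω, x₀ ω i * x₀ ω j ∂ℙ = Sigma0 i j)
    (hbdd : ∀ᵐ ω ∂ℙ, ∑ i, (x₀ ω i) ^ 2 ≤ C_m)
    (hη : Measure.map η ℙ =
      Measure.pi fun _ : Fin m => ProbabilityTheory.gaussianReal 0 1)
    (hindep : ProbabilityTheory.IndepFun x₀ η ℙ) :
    ∀ i j, (∫ ω, -(1 / σ) * qFun A Q Ptil B R (x₀ ω) (-(K.mulVec (x₀ ω)) + σ • η ω)
        * η ω i * x₀ ω j ∂ℙ)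
      = ((2 : ℝ) • (((R + Bᵀ * Ptil * B) * K - Bᵀ * Ptil * A) * Sigma0)) i j := by
  intro i j
  have hσ' : σ ≠ 0 := hσ.ne'
  have hRt : Rᵀ = R := hR
  have hPt : Ptilᵀ = Ptil := (by simpa using hPtil.1 : Ptil.IsSymm).eq
  have hη' : Measure.map η ℙ = Measure.pi fun _ : Fin m => stdg := hη
  set L : Matrix (Fin m) (Fin n) ℝ := Bᵀ*Ptil*A - (R + Bᵀ*Ptil*B)*K with hLdef
  set S : Matrix (Fin m) (Fin m) ℝ := R + Bᵀ*Ptil*B with hSdef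
  set M0 : Matrix (Fin n) (Fin n) ℝ :=
    Q + Kᵀ*(R*K) + (A - B*K)ᵀ*(Ptil*(A - B*K)) with hM0def
  set F0 : (Fin n → ℝ) → ℝ := fun x => -(1/σ) * (x ⬝ᵥ (M0 *ᵥ x)) * x j with hF0def
  set F1 : Fin m → (Fin n → ℝ) → ℝ := fun k x => -2 * ((L *ᵥ x) k) * x j with hF1def
  set F2 : Fin m → Fin m → (Fin n → ℝ) → ℝ := fun k l x => -σ * S k l * x j with hF2def
  -- pointwise decomposition
  have hpt : ∀ (x : Fin n → ℝ) (y : Fin m → ℝ),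
      -(1/σ) * qFun A Q Ptil B R x (-(K.mulVec x) + σ • y) * y i * x j
        = F0 x * mono (en i) y
          + (∑ k, F1 k x * mono (en k + en i) y)
          + (∑ k, ∑ l, F2 k l x * mono (en k + en l + en i) y) := by
    intro x y
    rw [qExpand A Q Ptil B R K hRt hPt σ x y, q0_form]
    simp only [mono_add, mono_en, hF0def, hF1def, hF2def, ← hM0def, ← hLdef, ← hSdef]
    have hdot1 : ((L *ᵥ x) ⬝ᵥ y) = ∑ k, (L *ᵥ x) k * y k := rfl
    have hdot2 : (y ⬝ᵥ (S *ᵥ y)) = ∑ k, y k * ∑ l, S k l * y l := rfl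
    rw [hdot1, hdot2]
    have step1 : -(1/σ) * ((x ⬝ᵥ (M0 *ᵥ x)) + 2*σ*(∑ k, (L *ᵥ x) k * y k)
          + σ^2*(∑ k, y k * ∑ l, S k l * y l)) * y i * x j
        = (-(1/σ) * (x ⬝ᵥ (M0 *ᵥ x)) * x j) * y i
          + (-2 * (∑ k, (L *ᵥ x) k * y k) * y i * x j)
          + (-σ * (∑ k, y k * ∑ l, S k l * y l) * y i * x j) := by
      field_simp
      ring
    rw [step1]
    congr 1
    · congr 1
      calc -2 * (∑ k, (L *ᵥ x) k * y k) * y i * x j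
          = ∑ k, ((L *ᵥ x) k * y k) * (-2 * y i * x j) := by
            rw [show -2 * (∑ k, (L *ᵥ x) k * y k) * y i * x j
              = (∑ k, (L *ᵥ x) k * y k) * (-2 * y i * x j) by ring, Finset.sum_mul]
        _ = ∑ k, -2 * (L *ᵥ x) k * x j * (y k * y i) :=
            Finset.sum_congr rfl fun k _ => by ring
    · calc -σ * (∑ k, y k * ∑ l, S k l * y l) * y i * x j
          = ∑ k, (y k * ∑ l, S k l * y l) * (-σ * y i * x j) := by
            rw [show -σ * (∑ k, y k * ∑ l, S k l * y l) * y i * x j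
              = (∑ k, y k * ∑ l, S k l * y l) * (-σ * y i * x j) by ring, Finset.sum_mul]
      _ = ∑ k, ∑ l, -σ * S k l * x j * (y k * y l * y i) := by
          refine Finset.sum_congr rfl fun k _ => ?_
          rw [show (y k * ∑ l, S k l * y l) * (-σ * y i * x j)
            = (∑ l, S k l * y l) * (y k * (-σ * y i * x j)) by ring, Finset.sum_mul]
          exact Finset.sum_congr rfl fun l _ => by ring
  -- the key integration lemma
  have keyInt : ∀ (F : (Fin n → ℝ) → ℝ), Measurable F → ∀ cF : ℝ,
      (∀ᵐ ω ∂ℙ, |F (x₀ ω)| ≤ cF) → ∀ e : Fin m → ℕ,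
      Integrable (fun ω => F (x₀ ω) * mono e (η ω)) ℙ ∧
      ∫ ω, F (x₀ ω) * mono e (η ω) ∂ℙ
        = (∫ ω, F (x₀ ω) ∂ℙ) * ∏ c', gM (e c') := by
    intro F hF cF hc e
    have hmono : Integrable (fun ω => mono e (η ω)) ℙ := by
      have h := mono_integrable (m := m) e
      rw [← hη'] at h
      exact (integrable_map_measure (mono_measurable e).aestronglyMeasurable
        hηmeas.aemeasurable).mp h
    have hbF : ∀ᵐ ω ∂ℙ, ‖F (x₀ ω)‖ ≤ cF := by
      filter_upwards [hc] with ω h using by simpa [Real.norm_eq_abs] using h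
    have hFx : Integrable (fun ω => F (x₀ ω)) ℙ :=
      Integrable.mono' (integrable_const cF)
        ((hF.comp hx₀meas).aestronglyMeasurable) hbF
    refine ⟨hmono.bdd_mul ((hF.comp hx₀meas).aestronglyMeasurable) hbF, ?_⟩
    have hind : ProbabilityTheory.IndepFun (fun ω => F (x₀ ω))
        (fun ω => mono e (η ω)) ℙ := hindep.comp hF (mono_measurable e)
    have hmul := hind.integral_mul_eq_mul_integral hFx.1 hmono.1
    show integral ℙ ((fun ω => F (x₀ ω)) * fun ω => mono e (η ω))
      = (∫ ω, F (x₀ ω) ∂ℙ) * ∏ c', gM (e c')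
    rw [hmul]
    congr 1
    rw [← MeasureTheory.integral_map hηmeas.aemeasurable
      (mono_measurable e).aestronglyMeasurable, hη', mono_integral]
  -- bounds
  have hC0 : 0 ≤ C_m := by
    haveI : (MeasureTheory.ae ℙ).NeBot := ae_neBot.mpr (IsProbabilityMeasure.ne_zero ℙ)
    obtain ⟨ω, hω⟩ := hbdd.exists
    exact le_trans (by positivity) hω
  have bF0 : ∀ᵐ ω ∂ℙ, |F0 (x₀ ω)| ≤ (1/σ) * ((∑ a, ∑ b, |M0 a b|) * C_m) * Real.sqrt C_m := by
    filter_upwards [hbdd] with ω h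
    have h1 : |x₀ ω ⬝ᵥ (M0 *ᵥ x₀ ω)| ≤ (∑ a, ∑ b, |M0 a b|) * C_m := quad_bound M0 C_m _ h
    have h2 : |x₀ ω j| ≤ Real.sqrt C_m := Real.abs_le_sqrt (sq_le_of_mem _ C_m h j)
    calc |F0 (x₀ ω)| = |1/σ| * |x₀ ω ⬝ᵥ (M0 *ᵥ x₀ ω)| * |x₀ ω j| := by
          rw [hF0def]; simp [abs_mul]
      _ ≤ (1/σ) * ((∑ a, ∑ b, |M0 a b|) * C_m) * Real.sqrt C_m := by
          rw [abs_of_pos (one_div_pos.mpr hσ)]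
          have hs : (0:ℝ) ≤ ∑ a, ∑ b, |M0 a b| :=
            Finset.sum_nonneg fun a _ => Finset.sum_nonneg fun b _ => abs_nonneg _
          exact mul_le_mul (mul_le_mul_of_nonneg_left h1 (le_of_lt (one_div_pos.mpr hσ))) h2
            (abs_nonneg _)
            (mul_nonneg (le_of_lt (one_div_pos.mpr hσ)) (mul_nonneg hs hC0))
  have bF1 : ∀ k, ∀ᵐ ω ∂ℙ, |F1 k (x₀ ω)| ≤ 2 * ((∑ a, |L k a|) * C_m) := by
    intro k
    filter_upwards [hbdd] with ω h
    have hmv : (L *ᵥ x₀ ω) k = ∑ a, L k a * x₀ ω a := rfl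
    calc |F1 k (x₀ ω)| = 2 * |(∑ a, L k a * x₀ ω a) * x₀ ω j| := by
          show |-2 * (L *ᵥ x₀ ω) k * x₀ ω j| = _
          rw [hmv, mul_assoc, abs_mul]
          norm_num
      _ ≤ 2 * ((∑ a, |L k a|) * C_m) :=
          mul_le_mul_of_nonneg_left (lin_bound _ C_m _ h j) (by norm_num)
  have bF2 : ∀ k l, ∀ᵐ ω ∂ℙ, |F2 k l (x₀ ω)| ≤ σ * |S k l| * Real.sqrt C_m := by
    intro k l
    filter_upwards [hbdd] with ω h
    have h2 : |x₀ ω j| ≤ Real.sqrt C_m := Real.abs_le_sqrt (sq_le_of_mem _ C_m h j)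
    calc |F2 k l (x₀ ω)| = σ * |S k l| * |x₀ ω j| := by
          show |-σ * S k l * x₀ ω j| = _
          rw [abs_mul, abs_mul, abs_neg, abs_of_pos hσ]
      _ ≤ σ * |S k l| * Real.sqrt C_m :=
          mul_le_mul_of_nonneg_left h2 (by positivity)
  -- measurability
  have mF0 : Measurable F0 := ((meas_dot M0).const_mul _).mul (measurable_pi_apply j)
  have mF1 : ∀ k, Measurable (F1 k) := fun k =>
    ((meas_mulVec L k).const_mul _).mul (measurable_pi_apply j)
  have mF2 : ∀ k l, Measurable (F2 k l) := fun k l =>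
    (measurable_const.mul (measurable_pi_apply j) : Measurable fun x : Fin n → ℝ => -σ * S k l * x j)
  -- individual terms
  have hT0 := keyInt F0 mF0 _ bF0 (en i)
  have hT1 : ∀ k, _ := fun k => keyInt (F1 k) (mF1 k) _ (bF1 k) (en k + en i)
  have hT2 : ∀ k l, _ := fun k l => keyInt (F2 k l) (mF2 k l) _ (bF2 k l) (en k + en l + en i)
  have iT1 : Integrable (fun ω => ∑ k, F1 k (x₀ ω) * mono (en k + en i) (η ω)) ℙ :=
    integrable_finset_sum _ fun k _ => (hT1 k).1
  have iT2 : Integrable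
      (fun ω => ∑ k, ∑ l, F2 k l (x₀ ω) * mono (en k + en l + en i) (η ω)) ℙ :=
    integrable_finset_sum _ fun k _ => integrable_finset_sum _ fun l _ => (hT2 k l).1
  have hfun : (fun ω => -(1 / σ) * qFun A Q Ptil B R (x₀ ω)
        (-(K.mulVec (x₀ ω)) + σ • η ω) * η ω i * x₀ ω j)
      = fun ω => F0 (x₀ ω) * mono (en i) (η ω)
          + (∑ k, F1 k (x₀ ω) * mono (en k + en i) (η ω))
          + (∑ k, ∑ l, F2 k l (x₀ ω) * mono (en k + en l + en i) (η ω)) :=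
    funext fun ω => hpt (x₀ ω) (η ω)
  have iT01 : Integrable (fun ω => F0 (x₀ ω) * mono (en i) (η ω)
      + ∑ k, F1 k (x₀ ω) * mono (en k + en i) (η ω)) ℙ := hT0.1.add iT1
  rw [hfun, integral_add iT01 iT2, integral_add hT0.1 iT1,
    hT0.2, prod_gM_one, mul_zero,
    integral_finset_sum _ fun k _ => (hT1 k).1,
    integral_finset_sum (μ := ℙ) Finset.univ
      (fun k _ => integrable_finset_sum _ fun l _ => (hT2 k l).1)]
  have e1 : ∀ k, ∫ ω, F1 k (x₀ ω) * mono (en k + en i) (η ω) ∂ℙ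
      = (∫ ω, F1 k (x₀ ω) ∂ℙ) * (if k = i then 1 else 0) := fun k => by
    rw [(hT1 k).2, prod_gM_two]
  have e2 : (∑ k : Fin m, ∫ ω, ∑ l, F2 k l (x₀ ω) * mono (en k + en l + en i) (η ω) ∂ℙ) = 0 :=
    Finset.sum_eq_zero fun k _ => by
      rw [integral_finset_sum _ fun l _ => (hT2 k l).1]
      exact Finset.sum_eq_zero fun l _ => by rw [(hT2 k l).2, prod_gM_three, mul_zero]
  rw [Finset.sum_congr rfl fun k _ => e1 k, e2, add_zero, zero_add]
  simp only [mul_ite, mul_one, mul_zero, Finset.sum_ite_eq', Finset.mem_univ, if_true]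
  -- compute the remaining integral
  have hF1i : (fun ω => F1 i (x₀ ω))
      = fun ω => ∑ a, (-2 * L i a) * (x₀ ω a * x₀ ω j) := by
    funext ω
    show -2 * (L *ᵥ x₀ ω) i * x₀ ω j = _
    have hmv : (L *ᵥ x₀ ω) i = ∑ a, L i a * x₀ ω a := rfl
    rw [hmv, show -2 * (∑ a, L i a * x₀ ω a) * x₀ ω j
      = (∑ a, L i a * x₀ ω a) * (-2 * x₀ ω j) by ring, Finset.sum_mul]
    exact Finset.sum_congr rfl fun a _ => by ring
  have iab : ∀ a, Integrable (fun ω => x₀ ω a * x₀ ω j) ℙ := fun a => by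
    refine Integrable.mono' (integrable_const C_m)
      ((((measurable_pi_apply a).comp hx₀meas).mul
        ((measurable_pi_apply j).comp hx₀meas)).aestronglyMeasurable) ?_
    filter_upwards [hbdd] with ω h using by
      rw [Real.norm_eq_abs]
      exact mul_le_of_mem _ C_m h a j
  rw [hF1i, integral_finset_sum _ fun a _ => ((iab a).const_mul _)]
  have e3 : ∀ a, ∫ ω, -2 * L i a * (x₀ ω a * x₀ ω j) ∂ℙ = -2 * L i a * Sigma0 a j :=
    fun a => by rw [MeasureTheory.integral_const_mul, hcov a j]
  rw [Finset.sum_congr rfl fun a _ => e3 a]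
  have hrhs : ((2 : ℝ) • ((S * K - Bᵀ * Ptil * A) * Sigma0)) i j
      = 2 * ∑ a, (S * K - Bᵀ * Ptil * A) i a * Sigma0 a j := by
    simp [Matrix.mul_apply, Matrix.smul_apply, smul_eq_mul]
  rw [hrhs, Finset.mul_sum]
  refine Finset.sum_congr rfl fun a _ => ?_
  have hL : L i a = (Bᵀ * Ptil * A) i a - (S * K) i a := by
    rw [hLdef, Matrix.sub_apply]
  have hSK : (S * K - Bᵀ * Ptil * A) i a = (S * K) i a - (Bᵀ * Ptil * A) i a :=
    Matrix.sub_apply _ _ _ _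
  rw [hL, hSK]
  ring
end

section
/- Let Q ∈ ℝ^{n×n}, R ∈ ℝ^{m×m}, and Σ₀ ∈ ℝ^{n×n} be symmetric positive definite, let P̃ ∈ ℝ^{n×n} be symmetric positive semidefinite, and let A ∈ ℝ^{n×n}, B ∈ ℝ^{n×m}. Define J̃(K) := tr((Q + KᵀRK + (A − BK)ᵀP̃(A − BK))Σ₀) for K ∈ ℝ^{m×n}. Then for every K, ‖K‖_F² ≤ J̃(K) / (σ_min(Σ₀)·σ_min(R)), where ‖·‖_F is the Frobenius norm. -/
open Matrix BigOperators MeasureTheory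

open RealInnerProductSpace

section AuxPSB
variable {n : ℕ}

lemma aux_trace_psd_nonneg {X : Matrix (Fin n) (Fin n) ℝ} (hX : X.PosSemidef) :
    0 ≤ X.trace := by
  refine Finset.sum_nonneg fun i _ => ?_
  simpa [dotProduct, mulVec, Pi.single_apply] using hX.dotProduct_mulVec_nonneg (Pi.single i 1)

open scoped MatrixOrder in
lemma aux_trace_mul_psd_nonneg {S X : Matrix (Fin n) (Fin n) ℝ}
    (hS : S.PosSemidef) (hX : X.PosSemidef) : 0 ≤ (S * X).trace := by
  have h2 : (S * X).trace = (CFC.sqrt S * X * CFC.sqrt S).trace := by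
    conv_lhs => rw [← CFC.sqrt_mul_sqrt_self S hS.nonneg]
    exact (Matrix.trace_mul_cycle (CFC.sqrt S) X (CFC.sqrt S)).symm
  rw [h2]
  have := hX.mul_mul_conjTranspose_same (CFC.sqrt S)
  rw [(CFC.sqrt_nonneg S).posSemidef.1.eq] at this
  exact aux_trace_psd_nonneg this

lemma aux_rayleigh_lower {M : Matrix (Fin n) (Fin n) ℝ} (hM : M.IsHermitian)
    {c : ℝ} (hc : ∀ i, c ≤ hM.eigenvalues i) (v : Fin n → ℝ) :
    c * (v ⬝ᵥ v) ≤ v ⬝ᵥ M *ᵥ v := by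
  classical
  set U : Matrix (Fin n) (Fin n) ℝ := (hM.eigenvectorUnitary : Matrix (Fin n) (Fin n) ℝ) with hUdef
  have hU : U * star U = 1 := Matrix.mem_unitaryGroup_iff.mp hM.eigenvectorUnitary.2
  have hspec : M = U * diagonal hM.eigenvalues * star U := by
    simpa using hM.spectral_theorem
  have hstar : star U = Uᵀ := by
    rw [Matrix.star_eq_conjTranspose, conjTranspose_eq_transpose_of_trivial]
  set w : Fin n → ℝ := Uᵀ *ᵥ v with hw
  have hdot : ∀ x : Fin n → ℝ, v ⬝ᵥ (U *ᵥ x) = w ⬝ᵥ x := fun x => by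
    rw [dotProduct_mulVec, hw, mulVec_transpose]
  have hUw : U *ᵥ w = v := by
    rw [hw, mulVec_mulVec, ← hstar, hU, one_mulVec]
  have hvv : v ⬝ᵥ v = ∑ i, w i ^ 2 := by
    have h1 := hdot w
    rw [hUw] at h1
    rw [h1]
    simp [dotProduct, sq]
  have hvMv : v ⬝ᵥ M *ᵥ v = ∑ i, hM.eigenvalues i * w i ^ 2 := by
    conv_lhs => rw [hspec, hstar, ← mulVec_mulVec, ← mulVec_mulVec, hdot]
    simp only [dotProduct, mulVec_diagonal]
    exact Finset.sum_congr rfl fun i _ => by ring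
  rw [hvv, hvMv, Finset.mul_sum]
  exact Finset.sum_le_sum fun i _ => mul_le_mul_of_nonneg_right (hc i) (sq_nonneg _)

lemma aux_psd_sub_smul {M : Matrix (Fin n) (Fin n) ℝ} (hM : M.IsHermitian) {c : ℝ}
    (h : ∀ v : Fin n → ℝ, c * (v ⬝ᵥ v) ≤ v ⬝ᵥ M *ᵥ v) : (M - c • 1).PosSemidef := by
  refine Matrix.PosSemidef.of_dotProduct_mulVec_nonneg ?_ ?_
  · simp [Matrix.IsHermitian, conjTranspose_sub, conjTranspose_smul, ← conjTranspose_eq_transpose_of_trivial, hM.eq]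
  · intro x
    have h1 : (c • (1 : Matrix (Fin n) (Fin n) ℝ)) *ᵥ x = c • x := by
      rw [smul_mulVec, one_mulVec]
    rw [sub_mulVec, dotProduct_sub, h1, star_trivial, dotProduct_smul]
    have := h x
    simp only [smul_eq_mul]
    linarith

instance aux_sphere_nonempty [NeZero n] : Nonempty {v : Fin n → ℝ // v ⬝ᵥ v = 1} := by
  refine ⟨⟨Pi.single 0 1, ?_⟩⟩
  simp [dotProduct, Pi.single_apply]

lemma aux_minEig_le_lamMin [NeZero n] {M : Matrix (Fin n) (Fin n) ℝ} (hM : M.IsHermitian)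
    {c : ℝ} (hc : ∀ i, c ≤ hM.eigenvalues i) : c ≤ lamMin M := by
  refine le_ciInf fun v => ?_
  have := aux_rayleigh_lower hM hc v.1
  rw [v.2, mul_one] at this
  exact this

lemma aux_unit_eigenvector {M : Matrix (Fin n) (Fin n) ℝ} (hM : M.IsHermitian) (i : Fin n) :
    (⇑(hM.eigenvectorBasis i) : Fin n → ℝ) ⬝ᵥ ⇑(hM.eigenvectorBasis i) = 1 := by
  have h1 : ‖hM.eigenvectorBasis i‖ = 1 := hM.eigenvectorBasis.orthonormal.1 i
  have h2 : inner ℝ (hM.eigenvectorBasis i) (hM.eigenvectorBasis i) = (1:ℝ) := by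
    rw [real_inner_self_eq_norm_sq, h1]; norm_num
  rw [← h2, PiLp.inner_apply]
  simp [dotProduct, RCLike.inner_apply, mul_comm, sq]

lemma aux_lamMin_le_eig [NeZero n] {M : Matrix (Fin n) (Fin n) ℝ} (hM : M.IsHermitian)
    {c : ℝ} (hc : ∀ i, c ≤ hM.eigenvalues i) (i : Fin n) :
    lamMin M ≤ hM.eigenvalues i := by
  have hbdd : BddBelow (Set.range fun v : {v : Fin n → ℝ // v ⬝ᵥ v = 1} =>
      v.1 ⬝ᵥ M *ᵥ v.1) := by
    refine ⟨c, ?_⟩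
    rintro x ⟨v, rfl⟩
    have := aux_rayleigh_lower hM hc v.1
    rw [v.2, mul_one] at this
    exact this
  have hval : (⇑(hM.eigenvectorBasis i) : Fin n → ℝ) ⬝ᵥ M *ᵥ ⇑(hM.eigenvectorBasis i)
      = hM.eigenvalues i := by
    rw [hM.mulVec_eigenvectorBasis, dotProduct_smul, smul_eq_mul,
      aux_unit_eigenvector hM i, mul_one]
  have := ciInf_le hbdd (⟨_, aux_unit_eigenvector hM i⟩ : {v : Fin n → ℝ // v ⬝ᵥ v = 1})
  rw [hval] at this
  exact this

end AuxPSB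
/-- minimum eigenvalue over nonempty finite index -/
noncomputable def minEig [NeZero n] {M : Matrix (Fin n) (Fin n) ℝ} (hM : M.IsHermitian) : ℝ :=
  Finset.univ.inf' (Finset.univ_nonempty) hM.eigenvalues

lemma minEig_le [NeZero n] {M : Matrix (Fin n) (Fin n) ℝ} (hM : M.IsHermitian) (i : Fin n) :
    minEig hM ≤ hM.eigenvalues i := Finset.inf'_le _ (Finset.mem_univ i)

lemma exists_minEig [NeZero n] {M : Matrix (Fin n) (Fin n) ℝ} (hM : M.IsHermitian) :
    ∃ i, minEig hM = hM.eigenvalues i := by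
  obtain ⟨i, -, hi⟩ := Finset.exists_mem_eq_inf' (Finset.univ_nonempty) hM.eigenvalues
  exact ⟨i, hi⟩

lemma aux_rayleigh_lamMin [NeZero n] {M : Matrix (Fin n) (Fin n) ℝ} (hM : M.IsHermitian)
    (v : Fin n → ℝ) : lamMin M * (v ⬝ᵥ v) ≤ v ⬝ᵥ M *ᵥ v := by
  have h1 := aux_rayleigh_lower hM (minEig_le hM) v
  have h2 : lamMin M ≤ minEig hM := by
    obtain ⟨i, hi⟩ := exists_minEig hM
    rw [hi]; exact aux_lamMin_le_eig hM (minEig_le hM) i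
  have h3 : 0 ≤ v ⬝ᵥ v := by
    simp only [dotProduct]
    exact Finset.sum_nonneg fun i _ => mul_self_nonneg _
  nlinarith

lemma aux_trace_mul_ge [NeZero n] {R X : Matrix (Fin n) (Fin n) ℝ}
    (hR : R.IsHermitian) (hX : X.PosSemidef) :
    lamMin R * X.trace ≤ (R * X).trace := by
  have hpsd : (R - lamMin R • 1).PosSemidef :=
    aux_psd_sub_smul hR (aux_rayleigh_lamMin hR)
  have h0 : 0 ≤ ((R - lamMin R • 1) * X).trace := aux_trace_mul_psd_nonneg hpsd hX
  rw [sub_mul, smul_mul_assoc, one_mul, trace_sub, trace_smul, smul_eq_mul] at h0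
  linarith

lemma aux_lamMin_pos [NeZero n] {M : Matrix (Fin n) (Fin n) ℝ} (hM : M.PosDef) :
    0 < lamMin M := by
  obtain ⟨i, hi⟩ := exists_minEig hM.1
  have h1 : 0 < minEig hM.1 := hi ▸ hM.eigenvalues_pos i
  have h2 := aux_minEig_le_lamMin hM.1 (minEig_le hM.1)
  linarith

lemma aux_transpose_mul_self_posDef [NeZero n] {M : Matrix (Fin n) (Fin n) ℝ} (hM : M.PosDef) :
    (Mᵀ * M).PosDef := by
  have hT : Mᵀ = M := by
    have := hM.1.eq
    rwa [conjTranspose_eq_transpose_of_trivial] at this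
  refine Matrix.PosDef.of_dotProduct_mulVec_pos ?_ ?_
  · have := (posSemidef_conjTranspose_mul_self M).1
    rwa [conjTranspose_eq_transpose_of_trivial] at this
  · intro x hx
    have hMx : M *ᵥ x ≠ 0 := by
      intro h
      have := hM.dotProduct_mulVec_pos hx
      rw [h, dotProduct_zero] at this
      exact lt_irrefl _ this
    have heq : star x ⬝ᵥ (Mᵀ * M) *ᵥ x = (M *ᵥ x) ⬝ᵥ (M *ᵥ x) := by
      rw [star_trivial, ← mulVec_mulVec, dotProduct_mulVec, vecMul_transpose]
    rw [heq]
    have hnn : 0 ≤ (M *ᵥ x) ⬝ᵥ (M *ᵥ x) :=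
      Finset.sum_nonneg fun i _ => mul_self_nonneg _
    have hne : (M *ᵥ x) ⬝ᵥ (M *ᵥ x) ≠ 0 := fun h => hMx (dotProduct_self_eq_zero.mp h)
    exact hnn.lt_of_ne (Ne.symm hne)

lemma aux_sigMin_pos {n : ℕ} [NeZero n] {M : Matrix (Fin n) (Fin n) ℝ} (hM : M.PosDef) :
    0 < sigMin M :=
  Real.sqrt_pos.mpr (aux_lamMin_pos (aux_transpose_mul_self_posDef hM))

lemma aux_sigMin_le_lamMin {n : ℕ} [NeZero n] {M : Matrix (Fin n) (Fin n) ℝ} (hM : M.PosDef) :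
    sigMin M ≤ lamMin M := by
  have hT : Mᵀ = M := by
    have := hM.1.eq
    rwa [conjTranspose_eq_transpose_of_trivial] at this
  obtain ⟨i, hi⟩ := exists_minEig hM.1
  set μ := hM.1.eigenvalues i with hμ
  have hμpos : 0 < μ := hM.eigenvalues_pos i
  set u : Fin n → ℝ := ⇑(hM.1.eigenvectorBasis i) with hu
  have hunit : u ⬝ᵥ u = 1 := aux_unit_eigenvector hM.1 i
  have h1 : (Mᵀ * M) *ᵥ u = (μ * μ) • u := by
    rw [hT, ← mulVec_mulVec, hM.1.mulVec_eigenvectorBasis, mulVec_smul,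
      hM.1.mulVec_eigenvectorBasis, smul_smul]
  have h2 : u ⬝ᵥ (Mᵀ * M) *ᵥ u = μ * μ := by
    rw [h1, dotProduct_smul, smul_eq_mul, hunit, mul_one]
  have hbdd : BddBelow (Set.range fun v : {v : Fin n → ℝ // v ⬝ᵥ v = 1} =>
      v.1 ⬝ᵥ (Mᵀ * M) *ᵥ v.1) := by
    refine ⟨0, ?_⟩
    rintro x ⟨v, rfl⟩
    dsimp only
    have hvv : v.1 ⬝ᵥ (Mᵀ * M) *ᵥ v.1 = (M *ᵥ v.1) ⬝ᵥ (M *ᵥ v.1) := by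
      rw [← mulVec_mulVec, dotProduct_mulVec, vecMul_transpose]
    rw [hvv]
    exact Finset.sum_nonneg fun j _ => mul_self_nonneg _
  have h3 : lamMin (Mᵀ * M) ≤ μ * μ := by
    have := ciInf_le hbdd (⟨u, hunit⟩ : {v : Fin n → ℝ // v ⬝ᵥ v = 1})
    rwa [h2] at this
  have h4 : sigMin M ≤ μ := by
    rw [sigMin]
    calc Real.sqrt (lamMin (Mᵀ * M)) ≤ Real.sqrt (μ * μ) := Real.sqrt_le_sqrt h3
    _ = μ := Real.sqrt_mul_self hμpos.le
  have h5 : μ ≤ lamMin M := hi ▸ aux_minEig_le_lamMin hM.1 (minEig_le hM.1)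
  linarith

lemma aux_lamMin_zero_of_zero (M : Matrix (Fin 0) (Fin 0) ℝ) : lamMin M = 0 := by
  have : IsEmpty {v : Fin 0 → ℝ // v ⬝ᵥ v = 1} := by
    refine ⟨fun v => ?_⟩
    have := v.2
    simp [dotProduct] at this
  rw [lamMin, iInf, Set.range_eq_empty, Real.sInf_empty]


/-- Sublemma: bound on the size of policies with bounded cost:
`‖K‖_F² ≤ J̃(K) / (σ_min(Σ₀)·σ_min(R))`. -/
theorem policy_size_bound {n m : ℕ}
    (A Ptil Sigma0 Q : Matrix (Fin n) (Fin n) ℝ) (B : Matrix (Fin n) (Fin m) ℝ)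
    (R : Matrix (Fin m) (Fin m) ℝ)
    (hQ : Q.PosDef) (hR : R.PosDef) (hSigma0 : Sigma0.PosDef)
    (hPtil : Ptil.PosSemidef)
    (K : Matrix (Fin m) (Fin n) ℝ) :
    fNorm K ^ 2 ≤
      ((Q + Kᵀ * R * K + (A - B * K)ᵀ * Ptil * (A - B * K)) * Sigma0).trace
        / (sigMin Sigma0 * sigMin R) := by
  rcases Nat.eq_zero_or_pos n with hn | hn
  · subst hn
    have h1 : sigMin Sigma0 = 0 := by
      rw [sigMin, aux_lamMin_zero_of_zero, Real.sqrt_zero]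
    rw [h1, zero_mul, div_zero]
    have : fNorm K = 0 := by simp [fNorm]
    rw [this]; norm_num
  rcases Nat.eq_zero_or_pos m with hm | hm
  · subst hm
    have h1 : sigMin R = 0 := by
      rw [sigMin, aux_lamMin_zero_of_zero, Real.sqrt_zero]
    rw [h1, mul_zero, div_zero]
    have : fNorm K = 0 := by simp [fNorm]
    rw [this]; norm_num
  haveI : NeZero n := ⟨hn.ne'⟩
  haveI : NeZero m := ⟨hm.ne'⟩
  have hSpsd := hSigma0.posSemidef
  -- trace identities
  have e1 : ((Kᵀ * R * K) * Sigma0).trace = (R * (K * Sigma0 * Kᵀ)).trace := by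
    rw [Matrix.mul_assoc (Kᵀ * R) K Sigma0, Matrix.mul_assoc Kᵀ R (K * Sigma0),
      Matrix.trace_mul_comm Kᵀ (R * (K * Sigma0)), Matrix.mul_assoc R (K * Sigma0) Kᵀ]
  have hX : (K * Sigma0 * Kᵀ).PosSemidef := by
    have := hSpsd.mul_mul_conjTranspose_same K
    rwa [conjTranspose_eq_transpose_of_trivial] at this
  have e2 : (K * Sigma0 * Kᵀ).trace = (Sigma0 * (Kᵀ * K)).trace := by
    rw [Matrix.trace_mul_comm (K * Sigma0) Kᵀ, ← Matrix.mul_assoc Kᵀ K Sigma0,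
      Matrix.trace_mul_comm (Kᵀ * K) Sigma0]
  have hY : (Kᵀ * K).PosSemidef := by
    have := posSemidef_conjTranspose_mul_self K
    rwa [conjTranspose_eq_transpose_of_trivial] at this
  have F2 : (Kᵀ * K).trace = ∑ i, ∑ j, (K i j) ^ 2 := by
    rw [Matrix.trace]
    simp only [Matrix.diag_apply, Matrix.mul_apply, Matrix.transpose_apply]
    rw [Finset.sum_comm]
    exact Finset.sum_congr rfl fun i _ => Finset.sum_congr rfl fun j _ => by ring
  have hFnn : 0 ≤ ∑ i, ∑ j, (K i j) ^ 2 :=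
    Finset.sum_nonneg fun i _ => Finset.sum_nonneg fun j _ => sq_nonneg _
  have hfNorm : fNorm K ^ 2 = ∑ i, ∑ j, (K i j) ^ 2 := Real.sq_sqrt hFnn
  -- trace bounds
  have a1 : lamMin R * (K * Sigma0 * Kᵀ).trace ≤ (R * (K * Sigma0 * Kᵀ)).trace :=
    aux_trace_mul_ge hR.1 hX
  have a2 : lamMin Sigma0 * (Kᵀ * K).trace ≤ (Sigma0 * (Kᵀ * K)).trace :=
    aux_trace_mul_ge hSigma0.1 hY
  have hlR : 0 < lamMin R := aux_lamMin_pos hR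
  have hlS : 0 < lamMin Sigma0 := aux_lamMin_pos hSigma0
  have hQ0 : 0 ≤ (Q * Sigma0).trace := aux_trace_mul_psd_nonneg hQ.posSemidef hSpsd
  have hS3 : ((A - B * K)ᵀ * Ptil * (A - B * K)).PosSemidef := by
    have := hPtil.conjTranspose_mul_mul_same (A - B * K)
    rwa [conjTranspose_eq_transpose_of_trivial] at this
  have hT0 : 0 ≤ (((A - B * K)ᵀ * Ptil * (A - B * K)) * Sigma0).trace :=
    aux_trace_mul_psd_nonneg hS3 hSpsd
  have hexp : ((Q + Kᵀ * R * K + (A - B * K)ᵀ * Ptil * (A - B * K)) * Sigma0).trace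
      = (Q * Sigma0).trace + ((Kᵀ * R * K) * Sigma0).trace
        + (((A - B * K)ᵀ * Ptil * (A - B * K)) * Sigma0).trace := by
    rw [Matrix.add_mul, Matrix.add_mul, Matrix.trace_add, Matrix.trace_add]
  have hsS : 0 < sigMin Sigma0 := aux_sigMin_pos hSigma0
  have hsR : 0 < sigMin R := aux_sigMin_pos hR
  have hSle : sigMin Sigma0 ≤ lamMin Sigma0 := aux_sigMin_le_lamMin hSigma0
  have hRle : sigMin R ≤ lamMin R := aux_sigMin_le_lamMin hR
  rw [le_div_iff₀ (by positivity)]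
  -- key chain
  have key : lamMin Sigma0 * lamMin R * (fNorm K ^ 2) ≤ ((Kᵀ * R * K) * Sigma0).trace := by
    rw [e1, hfNorm]
    calc lamMin Sigma0 * lamMin R * (∑ i, ∑ j, (K i j) ^ 2)
        = lamMin R * (lamMin Sigma0 * (Kᵀ * K).trace) := by rw [F2]; ring
      _ ≤ lamMin R * (Sigma0 * (Kᵀ * K)).trace := by
          exact mul_le_mul_of_nonneg_left a2 hlR.le
      _ = lamMin R * (K * Sigma0 * Kᵀ).trace := by rw [e2]
      _ ≤ (R * (K * Sigma0 * Kᵀ)).trace := a1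
  have hmono : fNorm K ^ 2 * (sigMin Sigma0 * sigMin R)
      ≤ lamMin Sigma0 * lamMin R * (fNorm K ^ 2) := by
    have h6 : sigMin Sigma0 * sigMin R ≤ lamMin Sigma0 * lamMin R :=
      mul_le_mul hSle hRle hsR.le hlS.le
    have h7 : 0 ≤ fNorm K ^ 2 := by rw [hfNorm]; exact hFnn
    nlinarith
  linarith
end
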